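/- Let ψ be a real-analytic function on [−1,0] (analytic in a neighborhood of 0) such that ∂ₓʲ Pⁿ ψ(0) = 0 for all n ≥ 0 and j = 0,1,2,3,4, where Pψ = ψ' + ψ''' − ψ⁽⁵⁾. Then ψ ≡ 0 on [−1,0]. -/

import Mathlib

noncomputable def Pop : (ℝ → ℝ) → (ℝ → ℝ) := fun g x =>
  deriv g x + iteratedDeriv 3 g x - iteratedDeriv 5 g x

lemma iteratedDeriv_iteratedDeriv (m j : ℕ) (f : ℝ → ℝ) :
    iteratedDeriv j (iteratedDeriv m f) = iteratedDeriv (j + m) f := by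
  induction m generalizing f with
  | zero => simp [iteratedDeriv_zero]
  | succ m ih =>
    rw [iteratedDeriv_succ' (n := m) (f := f), ih (deriv f), ← iteratedDeriv_succ',
      Nat.add_assoc]

lemma iteratedDerivWithin_isOpen {s : Set ℝ} {f : ℝ → ℝ} {x : ℝ} (n : ℕ)
    (hs : IsOpen s) (hx : x ∈ s) :
    iteratedDerivWithin n f s x = iteratedDeriv n f x := by
  rw [iteratedDerivWithin, iteratedDeriv, iteratedFDerivWithin_of_isOpen n hs hx]

lemma exists_open_analytic {f : ℝ → ℝ} (hf : AnalyticAt ℝ f 0) :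
    ∃ s : Set ℝ, IsOpen s ∧ (0 : ℝ) ∈ s ∧ AnalyticOnNhd ℝ f s := by
  obtain ⟨t, ht, hta⟩ := hf.eventually_analyticAt.exists_mem
  obtain ⟨s, hst, hs, h0⟩ := mem_nhds_iff.mp ht
  exact ⟨s, hs, h0, fun y hy => hta y (hst hy)⟩

lemma analyticOnNhd_iteratedDeriv {s : Set ℝ} (hs : IsOpen s) {f : ℝ → ℝ}
    (hf : AnalyticOnNhd ℝ f s) (n : ℕ) : AnalyticOnNhd ℝ (iteratedDeriv n f) s := by
  induction n with
  | zero => simpa [iteratedDeriv_zero] using hf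
  | succ n ih => rw [iteratedDeriv_succ]; exact ih.deriv

lemma pop_analyticOnNhd {s : Set ℝ} (hs : IsOpen s) {f : ℝ → ℝ}
    (hf : AnalyticOnNhd ℝ f s) : AnalyticOnNhd ℝ (Pop f) s := by
  have h1 : AnalyticOnNhd ℝ (deriv f) s := hf.deriv
  have h3 := analyticOnNhd_iteratedDeriv hs hf 3
  have h5 := analyticOnNhd_iteratedDeriv hs hf 5
  exact fun x hx => ((h1 x hx).add (h3 x hx)).sub (h5 x hx)

lemma pop_analyticAt {f : ℝ → ℝ} (hf : AnalyticAt ℝ f 0) : AnalyticAt ℝ (Pop f) 0 := by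
  obtain ⟨s, hs, h0, hfs⟩ := exists_open_analytic hf
  exact pop_analyticOnNhd hs hfs 0 h0

lemma iteratedDeriv_pop {f : ℝ → ℝ} (hf : AnalyticAt ℝ f 0) (j : ℕ) :
    iteratedDeriv j (Pop f) 0 =
      iteratedDeriv (j + 1) f 0 + iteratedDeriv (j + 3) f 0 - iteratedDeriv (j + 5) f 0 := by
  obtain ⟨s, hs, h0, hfs⟩ := exists_open_analytic hf
  have hud : UniqueDiffOn ℝ s := hs.uniqueDiffOn
  have h1 : AnalyticOnNhd ℝ (deriv f) s := hfs.deriv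
  have h3 := analyticOnNhd_iteratedDeriv hs hfs 3
  have h5 := analyticOnNhd_iteratedDeriv hs hfs 5
  have c1 : ContDiffOn ℝ j (deriv f) s := h1.contDiffOn hud
  have c3 : ContDiffOn ℝ j (iteratedDeriv 3 f) s := h3.contDiffOn hud
  have c5 : ContDiffOn ℝ j (iteratedDeriv 5 f) s := h5.contDiffOn hud
  have hPop : Pop f = (deriv f + iteratedDeriv 3 f) - iteratedDeriv 5 f := rfl
  have hsub : iteratedDerivWithin j (Pop f) s 0 =
      iteratedDerivWithin j (fun x => deriv f x + iteratedDeriv 3 f x) s 0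
        - iteratedDerivWithin j (iteratedDeriv 5 f) s 0 :=
    iteratedDerivWithin_sub h0 hud ((c1.add c3) 0 h0) (c5 0 h0)
  have hadd : iteratedDerivWithin j (fun x => deriv f x + iteratedDeriv 3 f x) s 0 =
      iteratedDerivWithin j (deriv f) s 0 + iteratedDerivWithin j (iteratedDeriv 3 f) s 0 :=
    iteratedDerivWithin_add h0 hud (c1 0 h0) (c3 0 h0)
  calc iteratedDeriv j (Pop f) 0 = iteratedDerivWithin j (Pop f) s 0 :=
        (iteratedDerivWithin_isOpen j hs h0).symm
    _ = iteratedDerivWithin j (deriv f) s 0 + iteratedDerivWithin j (iteratedDeriv 3 f) s 0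
        - iteratedDerivWithin j (iteratedDeriv 5 f) s 0 := by rw [hsub, hadd]
    _ = iteratedDeriv j (deriv f) 0 + iteratedDeriv j (iteratedDeriv 3 f) 0
        - iteratedDeriv j (iteratedDeriv 5 f) 0 := by
        rw [iteratedDerivWithin_isOpen j hs h0, iteratedDerivWithin_isOpen j hs h0,
          iteratedDerivWithin_isOpen j hs h0]
    _ = iteratedDeriv (j + 1) f 0 + iteratedDeriv (j + 3) f 0 - iteratedDeriv (j + 5) f 0 := by
        rw [← iteratedDeriv_one (f := f), iteratedDeriv_iteratedDeriv,
          iteratedDeriv_iteratedDeriv, iteratedDeriv_iteratedDeriv]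

lemma flat_all (k : ℕ) : ∀ f : ℝ → ℝ, AnalyticAt ℝ f 0 →
    (∀ n : ℕ, ∀ j ≤ 4, iteratedDeriv j (Pop^[n] f) 0 = 0) → iteratedDeriv k f 0 = 0 := by
  induction k using Nat.strong_induction_on with
  | _ k ih =>
    intro f hf hv
    by_cases hk : k ≤ 4
    · simpa using hv 0 k hk
    · push_neg at hk
      obtain ⟨m, rfl⟩ : ∃ m, k = m + 5 := ⟨k - 5, by omega⟩
      have hg : AnalyticAt ℝ (Pop f) 0 := pop_analyticAt hf
      have hvg : ∀ n : ℕ, ∀ j ≤ 4, iteratedDeriv j (Pop^[n] (Pop f)) 0 = 0 := by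
        intro n j hj
        have := hv (n + 1) j hj
        rwa [Function.iterate_succ_apply] at this
      have h1 : iteratedDeriv m (Pop f) 0 = 0 := ih m (by omega) (Pop f) hg hvg
      have h2 := iteratedDeriv_pop hf m
      have h3 : iteratedDeriv (m + 1) f 0 = 0 := ih (m + 1) (by omega) f hf hv
      have h4 : iteratedDeriv (m + 3) f 0 = 0 := ih (m + 3) (by omega) f hf hv
      rw [h1, h3, h4] at h2
      linarith

theorem unique_continuation_from_flat_data (ψ : ℝ → ℝ)
    (hψ : ∀ x ∈ Set.Icc (-1 : ℝ) 0, AnalyticAt ℝ ψ x)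
    (hvanish : ∀ n : ℕ, ∀ j ≤ 4, iteratedDeriv j (Pop^[n] ψ) 0 = 0) :
    ∀ x ∈ Set.Icc (-1 : ℝ) 0, ψ x = 0 := by
  have h0mem : (0 : ℝ) ∈ Set.Icc (-1 : ℝ) 0 := by constructor <;> norm_num
  have hA : AnalyticAt ℝ ψ 0 := hψ 0 h0mem
  have hflat : ∀ k : ℕ, iteratedDeriv k ψ 0 = 0 := fun k => flat_all k ψ hA hvanish
  obtain ⟨p, hp⟩ := hA
  have hp0 : p = 0 := by
    ext n : 1
    refine ContinuousMultilinearMap.ext (fun m => ?_)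
    obtain ⟨r, hr⟩ := hp
    have hfac := hr.factorial_smul (y := (1 : ℝ)) n
    rw [← iteratedDeriv_eq_iteratedFDeriv, hflat n] at hfac
    rw [nsmul_eq_mul] at hfac
    have hne : (Nat.factorial n : ℝ) ≠ 0 := Nat.cast_ne_zero.mpr n.factorial_ne_zero
    have hone : p n (fun _ => (1 : ℝ)) = 0 :=
      (mul_eq_zero.mp hfac).resolve_left hne
    have hm : p n m = (∏ i, m i) • p n (fun _ => (1 : ℝ)) := by
      have := (p n).map_smul_univ m (fun _ => (1 : ℝ))
      simpa using this.symm
    rw [hm, hone, smul_zero]; rfl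
  rw [hp0] at hp
  have hev : ψ =ᶠ[nhds 0] 0 := hp.eventually_eq_zero
  have := AnalyticOnNhd.eqOn_zero_of_preconnected_of_eventuallyEq_zero
    (f := ψ) (U := Set.Icc (-1 : ℝ) 0) hψ isPreconnected_Icc h0mem hev
  intro x hx
  exact this hx
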